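/- If A and B are admissible linear chains with e(A) + e(B) = 1, then also e(A^T) + e(B^T) = 1, where A^T denotes the reversed chain. -/

import Mathlib

/-- The tridiagonal matrix of a linear chain: diagonal entries from the list,
entries `-1` on the first sub- and super-diagonals, `0` elsewhere. -/
def chainMatrix (l : List ℤ) : Matrix (Fin l.length) (Fin l.length) ℤ :=
  fun i j =>
    if i = j then l.get i
    else if (i : ℕ) + 1 = (j : ℕ) ∨ (j : ℕ) + 1 = (i : ℕ) then -1 else 0

/-- The discriminant of a linear chain. -/
def disc (l : List ℤ) : ℤ := (chainMatrix l).det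

/-- A linear chain is admissible if it is nonempty and all entries are ≥ 2. -/
def Admissible (l : List ℤ) : Prop := l ≠ [] ∧ ∀ a ∈ l, 2 ≤ a

/-- The inductance of a chain. -/
def ind (l : List ℤ) : ℚ := (disc l.tail : ℚ) / (disc l : ℚ)

lemma disc_nil : disc ([] : List ℤ) = 1 := Matrix.det_fin_zero

lemma disc_single (a : ℤ) : disc [a] = a := by
  simp [disc, Matrix.det_fin_one, chainMatrix]

lemma chainMatrix_succ_succ (a : ℤ) (l : List ℤ) (i j : Fin l.length) :
    chainMatrix (a :: l) i.succ j.succ = chainMatrix l i j := by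
  have hadj : ((i.succ : ℕ) + 1 = (j.succ : ℕ) ∨ (j.succ : ℕ) + 1 = (i.succ : ℕ)) ↔
      ((i : ℕ) + 1 = (j : ℕ) ∨ (j : ℕ) + 1 = (i : ℕ)) := by
    simp only [Fin.val_succ]; omega
  have hget : (a :: l).get i.succ = l.get i := by
    simp [List.get_eq_getElem, Fin.val_succ]
  simp only [chainMatrix, Fin.succ_inj, hadj, hget]

set_option linter.unnecessarySeqFocus false in
lemma disc_cons_cons (a b : ℤ) (m : List ℤ) :
    disc (a :: b :: m) = a * disc (b :: m) - disc m := by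
  set n := m.length with hn
  set M : Matrix (Fin (n + 1 + 1)) (Fin (n + 1 + 1)) ℤ := chainMatrix (a :: b :: m) with hM
  have hMne : ∀ i j : Fin (n+1+1), ¬ ((i:ℕ)+1 = (j:ℕ) ∨ (j:ℕ)+1 = (i:ℕ)) →
      (i:ℕ) ≠ (j:ℕ) → M i j = 0 := by
    intro i j h1 h2
    simp only [hM, chainMatrix]
    rw [if_neg (fun h => h2 (congrArg Fin.val h)), if_neg h1]
  have hMadj : ∀ i j : Fin (n+1+1), ((i:ℕ)+1 = (j:ℕ) ∨ (j:ℕ)+1 = (i:ℕ)) → M i j = -1 := by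
    intro i j h1
    simp only [hM, chainMatrix]
    rw [if_neg, if_pos h1]
    intro h; subst h; omega
  have hminor0 : M.submatrix (Fin.succAbove 0) Fin.succ = chainMatrix (b :: m) := by
    funext i j
    simp only [Fin.succAbove_zero, Matrix.submatrix_apply]
    exact chainMatrix_succ_succ a (b :: m) i j
  have hdetN : (M.submatrix (Fin.succAbove (1 : Fin (n+1+1))) Fin.succ).det = - disc m := by
    have hN00 : M.submatrix (Fin.succAbove (1 : Fin (n+1+1))) Fin.succ 0 0 = -1 := by
      show M (Fin.succAbove 1 0) (Fin.succ 0) = -1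
      rw [Fin.one_succAbove_zero, Fin.succ_zero_eq_one]
      exact hMadj 0 1 (by left; simp [Fin.val_one])
    have hN0succ : ∀ j : Fin n, M.submatrix (Fin.succAbove (1 : Fin (n+1+1))) Fin.succ 0 j.succ = 0 := by
      intro j
      show M (Fin.succAbove 1 0) j.succ.succ = 0
      rw [Fin.one_succAbove_zero]
      exact hMne _ _ (by simp only [Fin.val_succ, Fin.val_zero] <;> omega)
        (by simp only [Fin.val_succ, Fin.val_zero] <;> omega)
    have hNminor : (M.submatrix (Fin.succAbove (1 : Fin (n+1+1))) Fin.succ).submatrix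
        Fin.succ (Fin.succAbove 0) = chainMatrix m := by
      funext i j
      simp only [Fin.succAbove_zero, Matrix.submatrix_apply]
      have h1 : Fin.succAbove (1 : Fin (n+1+1)) i.succ = i.succ.succ := by
        rw [show (1 : Fin (n+1+1)) = (0 : Fin (n+1)).succ from (Fin.succ_zero_eq_one).symm,
          Fin.succ_succAbove_succ, Fin.succAbove_zero]
      rw [h1]
      exact (chainMatrix_succ_succ a (b::m) i.succ j.succ).trans (chainMatrix_succ_succ b m i j)
    rw [Matrix.det_succ_row_zero, Fin.sum_univ_succ]
    have hz : ∀ j : Fin n, (-1 : ℤ) ^ ((j.succ : ℕ)) *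
        M.submatrix (Fin.succAbove (1 : Fin (n+1+1))) Fin.succ 0 j.succ *
        ((M.submatrix (Fin.succAbove (1 : Fin (n+1+1))) Fin.succ).submatrix Fin.succ
          (Fin.succAbove j.succ)).det = 0 := by
      intro j; rw [hN0succ]; ring
    rw [Finset.sum_congr rfl (fun j _ => hz j), Finset.sum_const, smul_zero, hN00, hNminor]
    simp [disc]
  have hMcol : ∀ i : Fin n, M i.succ.succ 0 = 0 := by
    intro i
    exact hMne _ _ (by simp only [Fin.val_succ, Fin.val_zero] <;> omega)
      (by simp only [Fin.val_succ, Fin.val_zero] <;> omega)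
  have hM00 : M 0 0 = a := by simp [hM, chainMatrix]
  have hM10 : M (Fin.succ 0) 0 = -1 := by
    rw [Fin.succ_zero_eq_one]
    exact hMadj 1 0 (by right; simp [Fin.val_one])
  have hd : disc (a :: b :: m) = M.det := rfl
  rw [hd, Matrix.det_succ_column_zero, Fin.sum_univ_succ, Fin.sum_univ_succ]
  have hz : ∀ i : Fin n, (-1 : ℤ) ^ ((i.succ.succ : ℕ)) * M i.succ.succ 0 *
      (M.submatrix (Fin.succAbove i.succ.succ) Fin.succ).det = 0 := by
    intro i; rw [hMcol]; ring
  rw [Finset.sum_congr rfl (fun i _ => hz i), Finset.sum_const, smul_zero,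
    hM00, hM10]
  simp only [Fin.succ_zero_eq_one]
  rw [hminor0, hdetN]
  simp only [Fin.val_zero, Fin.val_one, pow_zero, pow_one]
  show (1:ℤ) * a * disc (b :: m) + (-1 * -1 * -disc m + 0) = a * disc (b :: m) - disc m
  ring

private lemma getElem_congr' (L : List ℤ) (a b : ℕ) (ha : a < L.length) (hb : b < L.length)
    (h : a = b) : L[a]'ha = L[b]'hb := by subst h; rfl

lemma disc_reverse (l : List ℤ) : disc l.reverse = disc l := by
  have h : l.reverse.length = l.length := List.length_reverse (as := l)
  have hmat : (chainMatrix l).submatrix ((finCongr h).trans Fin.revPerm)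
      ((finCongr h).trans Fin.revPerm) = chainMatrix l.reverse := by
    set e := (finCongr h).trans (Fin.revPerm (n := l.length)) with he
    have hev : ∀ i : Fin l.reverse.length, ((e i : ℕ)) = l.length - 1 - (i : ℕ) := by
      intro i
      simp only [he, Equiv.trans_apply, Fin.revPerm_apply, Fin.val_rev, finCongr_apply,
        Fin.coe_cast]
      omega
    funext i j
    simp only [Matrix.submatrix_apply, chainMatrix]
    by_cases hij : i = j
    · subst hij
      rw [if_pos rfl, if_pos rfl]
      rw [List.get_eq_getElem, List.get_eq_getElem, List.getElem_reverse]
      exact getElem_congr' _ _ _ _ _ (by rw [hev i])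
    · have hvne : (i : ℕ) ≠ (j : ℕ) := fun hh => hij (Fin.ext hh)
      rw [if_neg (fun hh => hij (((finCongr h).trans Fin.revPerm).injective hh)), if_neg hij]
      have hadj : ((e i : ℕ)+1 = (e j : ℕ) ∨ (e j : ℕ)+1 = (e i : ℕ)) ↔
          ((i:ℕ)+1 = (j:ℕ) ∨ (j:ℕ)+1 = (i:ℕ)) := by
        rw [hev i, hev j]
        have hi := i.isLt; have hj := j.isLt
        omega
      rw [if_congr hadj rfl rfl]
  show (chainMatrix l.reverse).det = (chainMatrix l).det
  rw [← hmat]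
  exact Matrix.det_submatrix_equiv_self _ _

lemma disc_pos (n : ℕ) : ∀ (l : List ℤ), l.length ≤ n → (∀ x ∈ l, 2 ≤ x) →
    1 ≤ disc l ∧ (l ≠ [] → disc l.tail < disc l) := by
  induction n with
  | zero =>
    intro l hl _
    have : l = [] := List.eq_nil_of_length_eq_zero (Nat.le_zero.mp hl)
    subst this
    exact ⟨by rw [disc_nil], fun hc => absurd rfl hc⟩
  | succ n ih =>
    intro l hl hx
    match l with
    | [] => exact ⟨by rw [disc_nil], fun hc => absurd rfl hc⟩
    | [a] =>
      have ha : 2 ≤ a := hx a (by simp)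
      refine ⟨by rw [disc_single]; omega, fun _ => ?_⟩
      show disc [] < disc [a]
      rw [disc_nil, disc_single]; omega
    | a :: b :: m =>
      have ha : 2 ≤ a := hx a (by simp)
      have h1 := ih (b :: m) (by simp at hl ⊢; omega)
        (fun x hx' => hx x (by simp at hx' ⊢; tauto))
      have h2 := h1.2 (by simp)
      have hdb : 1 ≤ disc (b :: m) := h1.1
      have hdm : disc (b :: m).tail < disc (b :: m) := h2
      have htl : (b :: m).tail = m := rfl
      rw [htl] at hdm
      have key : disc (b :: m) < disc (a :: b :: m) := by
        rw [disc_cons_cons]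
        have : 2 * disc (b :: m) ≤ a * disc (b :: m) :=
          mul_le_mul_of_nonneg_right ha (by linarith)
        linarith
      exact ⟨by linarith, fun _ => key⟩

lemma disc_coprime (n : ℕ) : ∀ (l : List ℤ), l.length ≤ n →
    IsCoprime (disc l.tail) (disc l) := by
  induction n with
  | zero =>
    intro l hl
    have : l = [] := List.eq_nil_of_length_eq_zero (Nat.le_zero.mp hl)
    subst this
    show IsCoprime (disc []) (disc [])
    rw [disc_nil]; exact isCoprime_one_left
  | succ n ih =>
    intro l hl
    match l with
    | [] => show IsCoprime (disc []) (disc []); rw [disc_nil]; exact isCoprime_one_left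
    | [a] =>
      show IsCoprime (disc []) (disc [a])
      rw [disc_nil]; exact isCoprime_one_left
    | a :: b :: m =>
      have h := ih (b :: m) (by simp at hl ⊢; omega)
      have h' : IsCoprime (disc (b :: m)) (disc m) := by
        exact (show IsCoprime (disc m) (disc (b::m)) from h).symm
      show IsCoprime (disc (b :: m)) (disc (a :: b :: m))
      rw [disc_cons_cons]
      have := (h'.neg_right).add_mul_left_right a
      have heq : -disc m + disc (b :: m) * a = a * disc (b :: m) - disc m := by ring
      rwa [heq] at this

lemma dodg : ∀ (m : List ℤ) (a b : ℤ),
    disc (a :: b :: m) * disc ((b :: m).dropLast) =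
      disc (b :: m) * disc ((a :: b :: m).dropLast) - 1 := by
  intro m
  induction m with
  | nil =>
    intro a b
    show disc [a, b] * disc [] = disc [b] * disc [a] - 1
    rw [disc_cons_cons, disc_nil, disc_single, disc_single]
    ring
  | cons c m' ih =>
    intro a b
    have h1 : (a :: b :: c :: m').dropLast = a :: b :: (c :: m').dropLast := rfl
    have h2 : (b :: c :: m').dropLast = b :: (c :: m').dropLast := rfl
    rw [h1, h2, disc_cons_cons a b (c :: m'), disc_cons_cons a b ((c :: m').dropLast)]
    have ih' := ih b c
    rw [h2] at ih'
    linear_combination ih'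

lemma disc_dvd_aux (l : List ℤ) (hl : l ≠ []) :
    disc l ∣ disc l.tail * disc l.dropLast - 1 := by
  match l with
  | [a] =>
    show disc [a] ∣ disc [] * disc [] - 1
    rw [disc_nil]; simp
  | a :: b :: m =>
    refine ⟨disc ((b :: m).dropLast), ?_⟩
    have := dodg m a b
    show disc (b :: m) * disc ((a :: b :: m).dropLast) - 1 = _
    linarith

lemma disc_dropLast_rev (l : List ℤ) : disc l.reverse.tail = disc l.dropLast := by
  rw [List.tail_reverse, disc_reverse]

theorem ind_reverse_add_eq_one (A B : List ℤ) (hA : Admissible A) (hB : Admissible B)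
    (h : ind A + ind B = 1) : ind A.reverse + ind B.reverse = 1 := by
  obtain ⟨hAne, hA2⟩ := hA
  obtain ⟨hBne, hB2⟩ := hB
  set a := disc A.tail with ha
  set na := disc A with hna
  set b := disc B.tail with hb
  set nb := disc B with hnb
  have hposA := disc_pos A.length A le_rfl hA2
  have hposB := disc_pos B.length B le_rfl hB2
  have hna1 : 1 ≤ na := hposA.1
  have hnb1 : 1 ≤ nb := hposB.1
  have haLT : a < na := hposA.2 hAne
  have hbLT : b < nb := hposB.2 hBne
  have ha1 : 1 ≤ a := (disc_pos A.tail.length A.tail le_rfl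
    (fun x hx => hA2 x (List.mem_of_mem_tail hx))).1
  have hb1 : 1 ≤ b := (disc_pos B.tail.length B.tail le_rfl
    (fun x hx => hB2 x (List.mem_of_mem_tail hx))).1
  have hnaQ : (na : ℚ) ≠ 0 := by exact_mod_cast (by omega : na ≠ 0)
  have hnbQ : (nb : ℚ) ≠ 0 := by exact_mod_cast (by omega : nb ≠ 0)
  -- the integer identity a * nb + b * na = na * nb
  have hZ : a * nb + b * na = na * nb := by
    have h' : (a : ℚ) / na + (b : ℚ) / nb = 1 := h
    field_simp at h'
    rw [mul_comm b na]; exact_mod_cast h'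
  have hcopA : IsCoprime a na := disc_coprime A.length A le_rfl
  have hcopB : IsCoprime b nb := disc_coprime B.length B le_rfl
  -- na = nb
  have hdvd1 : na ∣ nb := by
    have : na ∣ a * nb := ⟨nb - b, by linarith⟩
    exact (hcopA.symm.dvd_of_dvd_mul_left this)
  have hdvd2 : nb ∣ na := by
    have : nb ∣ b * na := ⟨na - a, by linarith⟩
    exact (hcopB.symm.dvd_of_dvd_mul_left this)
  have hn_eq : na = nb := Int.dvd_antisymm (by omega) (by omega) hdvd1 hdvd2
  set n := na with hnn
  have hab : a + b = n := by
    have : (a + b) * n = n * n := by rw [hnn]; nlinarith [hZ, hn_eq]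
    have hn0 : n ≠ 0 := by omega
    exact mul_right_cancel₀ hn0 this
  -- dropLast discriminants
  set a' := disc A.dropLast with ha'
  set b' := disc B.dropLast with hb'
  have hdA : n ∣ a * a' - 1 := disc_dvd_aux A hAne
  have hdB : n ∣ b * b' - 1 := hn_eq ▸ disc_dvd_aux B hBne
  -- bounds on a', b'
  have hrevA := disc_pos A.reverse.length A.reverse le_rfl
    (fun x hx => hA2 x (List.mem_reverse.mp hx))
  have hrevB := disc_pos B.reverse.length B.reverse le_rfl
    (fun x hx => hB2 x (List.mem_reverse.mp hx))
  have hArev_ne : A.reverse ≠ [] := fun hc => hAne (by simpa using congrArg List.reverse hc)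
  have hBrev_ne : B.reverse ≠ [] := fun hc => hBne (by simpa using congrArg List.reverse hc)
  have ha'lt : a' < n := by
    have := hrevA.2 hArev_ne
    rwa [disc_dropLast_rev, disc_reverse] at this
  have hb'lt : b' < nb := by
    have := hrevB.2 hBrev_ne
    rwa [disc_dropLast_rev, disc_reverse] at this
  have ha'1 : 1 ≤ a' := (disc_pos A.dropLast.length A.dropLast le_rfl
    (fun x hx => hA2 x (List.Sublist.mem hx (List.dropLast_sublist A)))).1
  have hb'1 : 1 ≤ b' := (disc_pos B.dropLast.length B.dropLast le_rfl
    (fun x hx => hB2 x (List.Sublist.mem hx (List.dropLast_sublist B)))).1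
  -- n ∣ a' + b'
  have hdvdS : n ∣ a' + b' := by
    have key : n ∣ a * (a' + b') := by
      obtain ⟨u, hu⟩ := hdA
      obtain ⟨v, hv⟩ := hdB
      exact ⟨u - v + b', by linear_combination hu - hv + b' * hab⟩
    exact hcopA.symm.dvd_of_dvd_mul_left key
  have hS : a' + b' = n := by
    obtain ⟨k, hk⟩ := hdvdS
    have hb'lt' : b' < n := by rw [hn_eq]; exact hb'lt
    have hk1 : k = 1 := by nlinarith
    rw [hk, hk1, mul_one]
  -- conclude
  have e1 : ind A.reverse = (a' : ℚ) / n := by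
    rw [ind, disc_dropLast_rev, disc_reverse, ← ha', ← hna]
  have e2 : ind B.reverse = (b' : ℚ) / n := by
    rw [ind, disc_dropLast_rev, disc_reverse, ← hb', ← hnb, ← hn_eq]
  rw [e1, e2, ← add_div]
  rw [show ((a' : ℚ) + b') = ((a' + b' : ℤ) : ℚ) by push_cast; ring, hS]
  exact div_self hnaQ
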